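/- Let (G, ·, ▷) be a post-group. Define a ∘ b := a · (a ▷ b). Then (G, ∘) is a group, with the same identity element as (G, ·). -/

import Mathlib

/-- For a post-group `(G, ·, ▷)`, the operation `a ∘ b := a · (a ▷ b)` makes `G` a
group with the same identity element as `(G, ·)`: `∘` is associative, `1` is a
two-sided identity, and every element has a two-sided inverse. -/
theorem stmt_11 {G : Type*} [Group G] (r : G → G → G)
    (haut : ∀ a : G, Function.Bijective (r a))
    (hmul : ∀ a b c : G, r a (b * c) = r a b * r a c)
    (hassoc : ∀ a b c : G, r (a * r a b) c = r a (r b c)) :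
    (∀ a b c : G, (a * r a b) * r (a * r a b) c = a * r a (b * r b c)) ∧
    (∀ a : G, a * r a 1 = a) ∧
    (∀ a : G, 1 * r 1 a = a) ∧
    (∀ a : G, ∃ b : G, a * r a b = 1 ∧ b * r b a = 1) := by
  -- r a 1 = 1 since r a is a homomorphism
  have h1 : ∀ a : G, r a 1 = 1 := by
    intro a
    have := hmul a 1 1
    rw [one_mul] at this
    exact mul_eq_left.mp this.symm
  -- r 1 = id
  have hid : ∀ a : G, r 1 a = a := by
    intro a
    have := hassoc 1 1 a
    rw [h1, mul_one] at this
    exact (haut 1).1 this.symm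
  -- associativity of op
  have hA : ∀ a b c : G, (a * r a b) * r (a * r a b) c = a * r a (b * r b c) := by
    intro a b c
    rw [mul_assoc, hassoc, ← hmul]
  -- right identity
  have hRI : ∀ a : G, a * r a 1 = a := fun a => by rw [h1, mul_one]
  -- left identity
  have hLI : ∀ a : G, 1 * r 1 a = a := fun a => by rw [hid, one_mul]
  refine ⟨hA, hRI, hLI, ?_⟩
  -- right inverse exists for every element
  have hri : ∀ a : G, ∃ b : G, a * r a b = 1 := by
    intro a
    obtain ⟨b, hb⟩ := (haut a).2 a⁻¹
    exact ⟨b, by rw [hb, mul_inv_cancel]⟩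
  intro a
  obtain ⟨b, hb⟩ := hri a
  obtain ⟨c, hc⟩ := hri b
  refine ⟨b, hb, ?_⟩
  calc b * r b a = (b * r b a) * r (b * r b a) (b * r b c) := by
        rw [hA, hc, h1, mul_one]
    _ = b * r b (a * r a (b * r b c)) := by rw [hA]
    _ = b * r b ((a * r a b) * r (a * r a b) c) := by rw [hassoc, mul_assoc, ← hmul]
    _ = b * r b (1 * r 1 c) := by rw [hb]
    _ = 1 := by rw [hid, one_mul, hc]
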